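/- Let X and Y be normalized automata over A and S with converging behaviors x := ⟦X⟧ and y := ⟦Y⟧ (both proper since X and Y are normalized). Then the diverging behavior of the conjoin X ⋆ Y equals the conjoin of the behaviors: for every infinite word w and every n ∈ ℕ, (X ⋆ Y)(w,n) = (x·y*)(w[0..n))·χ(w,x·y*). -/

import Mathlib

open scoped Classical

/-- A weighted automaton over alphabet `A` and semiring `S`: a finite set of
states `Q`, initial distribution `I`, final distribution `F`, and a transition
matrix `M a` for each letter `a`. -/
structure WA (A : Type) (S : Type) [Semiring S] where
  Q : Type
  [fin : Fintype Q]
  [deq : DecidableEq Q]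
  I : Q → S
  F : Q → S
  M : A → Matrix Q Q S

attribute [instance] WA.fin WA.deq

variable {A S : Type} [Semiring S]

/-- The product `M(a₀)·…·M(a_{n−1})` over a finite word (identity for `[]`). -/
def Mword (𝒜 : WA A S) (w : List A) : Matrix 𝒜.Q 𝒜.Q S :=
  (w.map 𝒜.M).prod

/-- The converging behavior `⟦𝒜⟧(w) = Σ_{i,f} I(i)·M(w)_{i,f}·F(f)`. -/
def convB (𝒜 : WA A S) (w : List A) : S :=
  ∑ i, ∑ f, 𝒜.I i * Mword 𝒜 w i f * 𝒜.F f

/-- The first `n` letters of an infinite word. -/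
def wpre (w : ℕ → A) (n : ℕ) : List A := (List.range n).map w

/-- A pair of states `(i,f)` is activated by the infinite word `w` if for
every `n₀` there is `n ≥ n₀` with `M(w[0..n))_{i,f} ≠ 0`. -/
def Activated (𝒜 : WA A S) (w : ℕ → A) (i f : 𝒜.Q) : Prop :=
  ∀ n₀ : ℕ, ∃ n, n₀ ≤ n ∧ Mword 𝒜 (wpre w n) i f ≠ 0

/-- The diverging behavior `𝒜(w,n) = Σ_{(i,f) activated} I(i)·M(w[0..n))_{i,f}·F(f)`. -/
noncomputable def divB (𝒜 : WA A S) (w : ℕ → A) (n : ℕ) : S :=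
  ∑ p : 𝒜.Q × 𝒜.Q,
    if Activated 𝒜 w p.1 p.2 then
      𝒜.I p.1 * Mword 𝒜 (wpre w n) p.1 p.2 * 𝒜.F p.2
    else 0

/-- Product of converging power series: sum over all splittings of the word. -/
def cmul (x y : List A → S) : List A → S :=
  fun w => ∑ k ∈ Finset.range (w.length + 1), x (w.take k) * y (w.drop k)

/-- The multiplicative unit: 1 on the empty word, 0 elsewhere. -/
def cone : List A → S := fun w => match w with | [] => 1 | _ => 0

/-- Powers of a converging power series. -/
def cpow (x : List A → S) : ℕ → (List A → S)
  | 0 => cone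
  | n + 1 => cmul x (cpow x n)

/-- The star `x* = Σ_{k ≥ 0} x^k`; for proper `x` only the terms with
`k ≤ |w|` can contribute on the word `w`. -/
def cstar (x : List A → S) : List A → S :=
  fun w => ∑ k ∈ Finset.range (w.length + 1), cpow x k w

/-- `Rat*(S,A)`: the smallest set of converging power series containing all
finitely supported ones and closed under sum, product, and star of proper
members. -/
inductive IsRat : (List A → S) → Prop
  | finite (x : List A → S) (h : (Function.support x).Finite) : IsRat x
  | add {x y : List A → S} : IsRat x → IsRat y → IsRat (x + y)
  | mul {x y : List A → S} : IsRat x → IsRat y → IsRat (cmul x y)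
  | star {x : List A → S} : IsRat x → x [] = 0 → IsRat (cstar x)

/-- `χ(w,x) = 1` iff arbitrarily long prefixes of `w` have nonzero coefficient. -/
noncomputable def chi (w : ℕ → A) (x : List A → S) : S :=
  if ∀ n₀ : ℕ, ∃ n, n₀ ≤ n ∧ x (wpre w n) ≠ 0 then 1 else 0

/-- `s^ω(w,n) = s*(w[0..n))·χ(w,s*)`. -/
noncomputable def omegaPS (s : List A → S) : (ℕ → A) → ℕ → S :=
  fun w n => cstar s (wpre w n) * chi w (cstar s)

/-- The conjoin `(x ⋆ y)(w,n) = (x·y*)(w[0..n))·χ(w,x·y*)`. -/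
noncomputable def conjoinPS (x y : List A → S) : (ℕ → A) → ℕ → S :=
  fun w n => cmul x (cstar y) (wpre w n) * chi w (cmul x (cstar y))

/-- `Rat^ω(S,A)`: the smallest set of diverging power series closed under
finite sums and left/right scalar multiplication containing all `x ⋆ y` and
`z^ω` for proper rational `x`, `y`, `z`. -/
inductive IsRatOmega : ((ℕ → A) → ℕ → S) → Prop
  | zero : IsRatOmega (fun _ _ => 0)
  | add {p q : (ℕ → A) → ℕ → S} :
      IsRatOmega p → IsRatOmega q → IsRatOmega (fun w n => p w n + q w n)
  | smul_left (s : S) {p : (ℕ → A) → ℕ → S} :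
      IsRatOmega p → IsRatOmega (fun w n => s * p w n)
  | smul_right (s : S) {p : (ℕ → A) → ℕ → S} :
      IsRatOmega p → IsRatOmega (fun w n => p w n * s)
  | conjoin {x y : List A → S} :
      IsRat x → x [] = 0 → IsRat y → y [] = 0 → IsRatOmega (conjoinPS x y)
  | omega {z : List A → S} : IsRat z → z [] = 0 → IsRatOmega (omegaPS z)

/-- Scalar multiples `l·𝒜·r` of an automaton. -/
def smulWA (l : S) (𝒜 : WA A S) (r : S) : WA A S where
  Q := 𝒜.Q
  I := fun i => l * 𝒜.I i
  F := fun f => 𝒜.F f * r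
  M := 𝒜.M

/-- The disjoint-union (sum) automaton. -/
def addWA (𝒜 ℬ : WA A S) : WA A S where
  Q := 𝒜.Q ⊕ ℬ.Q
  I := Sum.elim 𝒜.I ℬ.I
  F := Sum.elim 𝒜.F ℬ.F
  M := fun a => Matrix.fromBlocks (𝒜.M a) 0 0 (ℬ.M a)

/-- `𝒜` is normalized with initial state `qI` and final state `qF`. -/
def IsNormalizedAt (𝒜 : WA A S) (qI qF : 𝒜.Q) : Prop :=
  qI ≠ qF ∧ (∀ i, 𝒜.I i = if i = qI then 1 else 0) ∧
    (∀ f, 𝒜.F f = if f = qF then 1 else 0) ∧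
    (∀ (a : A) (i : 𝒜.Q), 𝒜.M a i qI = 0) ∧ (∀ (a : A) (j : 𝒜.Q), 𝒜.M a qF j = 0)

/-- `𝒜` is normalized. -/
def IsNormalized (𝒜 : WA A S) : Prop := ∃ qI qF, IsNormalizedAt 𝒜 qI qF

/-- `𝒜` is a loopback automaton with loopback state `q₀`. -/
def IsLoopbackAt (𝒜 : WA A S) (q₀ : 𝒜.Q) : Prop :=
  (∀ i, 𝒜.I i = if i = q₀ then 1 else 0) ∧ (∀ f, 𝒜.F f = if f = q₀ then 1 else 0)

/-- `𝒜` is a loopback automaton. -/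
def IsLoopback (𝒜 : WA A S) : Prop := ∃ q₀, IsLoopbackAt 𝒜 q₀

/-- `𝒜` is a loopback automaton with prelude. -/
def IsLoopbackWithPrelude (𝒜 : WA A S) : Prop :=
  ∃ qI qF, qI ≠ qF ∧ (∀ i, 𝒜.I i = if i = qI then 1 else 0) ∧
    (∀ f, 𝒜.F f = if f = qF then 1 else 0) ∧
    (∀ (a : A) (i : 𝒜.Q), 𝒜.M a i qI = 0)

/-- `𝒜` is a bridge automaton. -/
def IsBridge (𝒜 : WA A S) : Prop :=
  ∃ qI qF, qI ≠ qF ∧ (∀ i, 𝒜.I i = if i = qI then 1 else 0) ∧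
    (∀ f, 𝒜.F f = if f = qF then 1 else 0)

/-- The unroll of a loopback automaton with loopback state `q₀`: adjoin a
fresh final state, redirect all edges ending at `q₀` to it. -/
def unroll (L : WA A S) (q₀ : L.Q) : WA A S where
  Q := L.Q ⊕ Unit
  I := Sum.elim (fun i => if i = q₀ then 1 else 0) (fun _ => 0)
  F := Sum.elim (fun _ => 0) (fun _ => 1)
  M := fun a => Matrix.of fun p q =>
    match p, q with
    | Sum.inl i, Sum.inl j => if j = q₀ then 0 else L.M a i j
    | Sum.inl i, Sum.inr _ => L.M a i q₀
    | Sum.inr _, _ => 0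

/-- The conjoin `X ⋆ Y` of two normalized automata (initial/final states
`xI`, `xF` and `yI`, `yF`): the disjoint sum of `X` minus its final state and
the roll of `Y`, with edges of `X` ending at `xF` redirected to the loopback
state `yI`. -/
def conjoinWA (X : WA A S) (xI xF : X.Q) (Y : WA A S) (yI yF : Y.Q) : WA A S where
  Q := {i : X.Q // i ≠ xF} ⊕ {j : Y.Q // j ≠ yF}
  I := Sum.elim (fun i => if i.1 = xI then 1 else 0) (fun _ => 0)
  F := Sum.elim (fun _ => 0) (fun j => if j.1 = yI then 1 else 0)
  M := fun a => Matrix.of fun p q =>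
    match p, q with
    | Sum.inl i, Sum.inl j => X.M a i.1 j.1
    | Sum.inl i, Sum.inr j => if j.1 = yI then X.M a i.1 xF else 0
    | Sum.inr _, Sum.inl _ => 0
    | Sum.inr i, Sum.inr j => if j.1 = yI then Y.M a i.1 yF else Y.M a i.1 j.1

/-- The finite slice `w[i..j)` of a biinfinite word. -/
def bpre (w : ℤ → A) (i j : ℤ) : List A :=
  (List.range (j - i).toNat).map (fun k => w (i + k))

/-- A pair of states `(p,q)` is activated by the biinfinite word `w` if for
all `i₀ ≤ j₀` there are `i ≤ i₀` and `j ≥ j₀` with `M(w[i..j))_{p,q} ≠ 0`. -/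
def BActivated (𝒜 : WA A S) (w : ℤ → A) (p q : 𝒜.Q) : Prop :=
  ∀ i₀ j₀ : ℤ, i₀ ≤ j₀ → ∃ i ≤ i₀, ∃ j, j₀ ≤ j ∧ Mword 𝒜 (bpre w i j) p q ≠ 0

/-- The bidiverging behavior
`𝒜(w,i,n) = Σ_{(p,q) activated} I(p)·M(w[i..i+n))_{p,q}·F(q)`. -/
noncomputable def bdivB (𝒜 : WA A S) (w : ℤ → A) (i : ℤ) (n : ℕ) : S :=
  ∑ p : 𝒜.Q × 𝒜.Q,
    if BActivated 𝒜 w p.1 p.2 then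
      𝒜.I p.1 * Mword 𝒜 (bpre w i (i + n)) p.1 p.2 * 𝒜.F p.2
    else 0

/-- `χ_ζ(w,x) = 1` iff arbitrarily long slices of `w` have nonzero coefficient. -/
noncomputable def chiZ (w : ℤ → A) (x : List A → S) : S :=
  if ∀ i₀ j₀ : ℤ, i₀ ≤ j₀ → ∃ i ≤ i₀, ∃ j, j₀ ≤ j ∧ x (bpre w i j) ≠ 0 then 1 else 0

/-- `s^ζ(w,i,n) = s*(w[i..i+n))·χ_ζ(w,s*)`. -/
noncomputable def zetaPS (s : List A → S) : (ℤ → A) → ℤ → ℕ → S :=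
  fun w i n => cstar s (bpre w i (i + n)) * chiZ w (cstar s)

/-- The conjoin `(x ⋆ m ⋆ y)(w,i,n) = (x*·m·y*)(w[i..i+n))·χ_ζ(w,x*·m·y*)`. -/
noncomputable def conjoin3PS (x m y : List A → S) : (ℤ → A) → ℤ → ℕ → S :=
  fun w i n =>
    cmul (cstar x) (cmul m (cstar y)) (bpre w i (i + n)) *
      chiZ w (cmul (cstar x) (cmul m (cstar y)))

/-- `Rat^ζ(S,A)`: the smallest set of bidiverging power series closed under
finite sums and left/right scalar multiplication containing all `x ⋆ m ⋆ y`
and `z^ζ` for proper rational `x`, `m`, `y`, `z`. -/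
inductive IsRatZeta : ((ℤ → A) → ℤ → ℕ → S) → Prop
  | zero : IsRatZeta (fun _ _ _ => 0)
  | add {p q : (ℤ → A) → ℤ → ℕ → S} :
      IsRatZeta p → IsRatZeta q → IsRatZeta (fun w i n => p w i n + q w i n)
  | smul_left (s : S) {p : (ℤ → A) → ℤ → ℕ → S} :
      IsRatZeta p → IsRatZeta (fun w i n => s * p w i n)
  | smul_right (s : S) {p : (ℤ → A) → ℤ → ℕ → S} :
      IsRatZeta p → IsRatZeta (fun w i n => p w i n * s)
  | conjoin {x m y : List A → S} :
      IsRat x → x [] = 0 → IsRat m → m [] = 0 → IsRat y → y [] = 0 →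
      IsRatZeta (conjoin3PS x m y)
  | zeta {z : List A → S} : IsRat z → z [] = 0 → IsRatZeta (zetaPS z)

/-- The conjoin `X ⋆ M̂ ⋆ Y` of three normalized automata: the roll of `X`
(loopback `xI`), the middle of `M̂`, and the roll of `Y` (loopback `yI`), with
the edges of `M̂` leaving `mI` re-sourced at `xI`, the edges of `M̂` entering
`mF` re-targeted at `yI`, and direct `mI → mF` edges becoming `xI → yI`. -/
def conjoin3WA (X : WA A S) (xI xF : X.Q) (Mh : WA A S) (mI mF : Mh.Q)
    (Y : WA A S) (yI yF : Y.Q) : WA A S where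
  Q := {i : X.Q // i ≠ xF} ⊕ ({k : Mh.Q // k ≠ mI ∧ k ≠ mF} ⊕ {j : Y.Q // j ≠ yF})
  I := Sum.elim (fun i => if i.1 = xI then 1 else 0) (fun _ => 0)
  F := Sum.elim (fun _ => 0) (Sum.elim (fun _ => 0) (fun j => if j.1 = yI then 1 else 0))
  M := fun a => Matrix.of fun p q =>
    match p, q with
    | Sum.inl i, Sum.inl j => if j.1 = xI then X.M a i.1 xF else X.M a i.1 j.1
    | Sum.inl i, Sum.inr (Sum.inl k) => if i.1 = xI then Mh.M a mI k.1 else 0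
    | Sum.inl i, Sum.inr (Sum.inr j) =>
        if i.1 = xI ∧ j.1 = yI then Mh.M a mI mF else 0
    | Sum.inr (Sum.inl _), Sum.inl _ => 0
    | Sum.inr (Sum.inl k), Sum.inr (Sum.inl l) => Mh.M a k.1 l.1
    | Sum.inr (Sum.inl k), Sum.inr (Sum.inr j) => if j.1 = yI then Mh.M a k.1 mF else 0
    | Sum.inr (Sum.inr _), Sum.inl _ => 0
    | Sum.inr (Sum.inr _), Sum.inr (Sum.inl _) => 0
    | Sum.inr (Sum.inr i), Sum.inr (Sum.inr j) =>
        if j.1 = yI then Y.M a i.1 yF else Y.M a i.1 j.1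


section AuxLemmas

lemma Mword_nil (𝒜 : WA A S) : Mword 𝒜 [] = 1 := rfl

lemma Mword_cons (𝒜 : WA A S) (a : A) (u : List A) :
    Mword 𝒜 (a :: u) = 𝒜.M a * Mword 𝒜 u := by
  simp [Mword]

lemma Mword_cons_apply (𝒜 : WA A S) (a : A) (u : List A) (i j : 𝒜.Q) :
    Mword 𝒜 (a :: u) i j = ∑ l, 𝒜.M a i l * Mword 𝒜 u l j := by
  rw [Mword_cons, Matrix.mul_apply]

lemma cone_eq (u : List A) : (cone u : S) = if u = [] then 1 else 0 := by
  cases u <;> simp [cone]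

lemma cmul_nil (f g : List A → S) : cmul f g [] = f [] * g [] := by
  simp [cmul]

lemma cmul_cons (f g : List A → S) (a : A) (u : List A) :
    cmul f g (a :: u)
      = f [] * g (a :: u)
        + ∑ k ∈ Finset.range (u.length + 1), f (a :: u.take k) * g (u.drop k) := by
  rw [cmul]
  simp only [List.length_cons]
  rw [Finset.sum_range_succ']
  simp only [List.take_succ_cons, List.drop_succ_cons, List.take_zero, List.drop_zero]
  exact add_comm _ _

lemma cmul_cone_left (g : List A → S) (u : List A) : cmul cone g u = g u := by
  cases u with
  | nil => simp [cmul_nil, cone]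
  | cons a u =>
    rw [cmul_cons]
    simp [cone_eq]

lemma cpow_eq_zero {x : List A → S} (hx : x [] = 0) :
    ∀ (k : ℕ) (w : List A), w.length < k → cpow x k w = 0 := by
  intro k
  induction k with
  | zero => intro w h; exact absurd h (Nat.not_lt_zero _)
  | succ k ih =>
    intro w h
    show cmul x (cpow x k) w = 0
    rw [cmul]
    refine Finset.sum_eq_zero fun m hm => ?_
    rcases Nat.eq_zero_or_pos m with h0 | h0
    · subst h0; simp [hx]
    · simp only [Finset.mem_range] at hm
      have hlen : (w.drop m).length < k := by
        rw [List.length_drop]; omega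
      rw [ih _ hlen, mul_zero]

lemma cstar_unfold {x : List A → S} (hx : x [] = 0) (w : List A) :
    cstar x w = cone w + cmul x (cstar x) w := by
  rw [cstar, Finset.sum_range_succ']
  rw [show (cpow x 0 w : S) = cone w from rfl, add_comm]
  congr 1
  have step1 : ∑ k ∈ Finset.range w.length, cpow x (k + 1) w
      = ∑ k ∈ Finset.range (w.length + 1), cpow x (k + 1) w := by
    exact (Finset.sum_subset (f := fun k => cpow x (k + 1) w)
      (Finset.range_subset_range.2 (Nat.le_succ _)) (fun k hk hk' =>
        cpow_eq_zero hx _ _ (Nat.lt_succ_of_le (Nat.le_of_not_lt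
          (fun h => hk' (Finset.mem_range.2 h))))))
  rw [step1]
  simp only [cmul]
  have step2 : ∀ m ∈ Finset.range (w.length + 1),
      x (w.take m) * cstar x (w.drop m)
        = ∑ k ∈ Finset.range (w.length + 1), x (w.take m) * cpow x k (w.drop m) := by
    intro m hm
    simp only [Finset.mem_range] at hm
    simp only [cstar, Finset.mul_sum]
    refine Finset.sum_subset ?_ ?_
    · refine Finset.range_subset_range.2 ?_
      rw [List.length_drop]; omega
    · intro k hk hk'
      simp only [Finset.mem_range, List.length_drop] at hk hk'
      rcases Nat.eq_zero_or_pos m with h0 | h0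
      · subst h0; simp [hx]
      · have : (w.drop m).length < k := by rw [List.length_drop]; omega
        rw [cpow_eq_zero hx _ _ this, mul_zero]
  rw [Finset.sum_congr rfl step2, Finset.sum_comm]
  refine Finset.sum_congr rfl fun k _ => ?_
  show (cmul x (cpow x k) w : S) = _
  simp only [cmul]

lemma convB_eq {X : WA A S} {xI xF : X.Q} (hX : IsNormalizedAt X xI xF) (v : List A) :
    convB X v = Mword X v xI xF := by
  obtain ⟨-, hI, hF, -, -⟩ := hX
  simp [convB, hI, hF, ite_mul, mul_ite, Finset.sum_ite_eq']

lemma Mword_from_final {Y : WA A S} {yI yF : Y.Q} (hY : IsNormalizedAt Y yI yF) :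
    ∀ (v : List A) (j : Y.Q), Mword Y v yF j = if v = [] ∧ yF = j then 1 else 0 := by
  intro v j
  cases v with
  | nil => simp [Mword_nil, Matrix.one_apply]
  | cons a v =>
    rw [Mword_cons_apply]
    simp [hY.2.2.2.2]

lemma sum_subtype_ne {Q : Type} [Fintype Q] [DecidableEq Q] (q0 : Q) (g : Q → S) :
    (∑ l : {l : Q // l ≠ q0}, g l.1) = ∑ l : Q, if l = q0 then 0 else g l := by
  classical
  rw [← Finset.sum_subtype (Finset.univ.filter (fun l => l ≠ q0))
    (by simp) g]
  rw [Finset.sum_filter]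
  refine Finset.sum_congr rfl fun l _ => ?_
  by_cases h : l = q0 <;> simp [h]

lemma sum_split_at {Q : Type} [Fintype Q] [DecidableEq Q] (q0 : Q) (g : Q → S) :
    (∑ l : Q, g l) = (∑ l : Q, if l = q0 then 0 else g l) + g q0 := by
  classical
  have h : ∀ l : Q, g l = (if l = q0 then 0 else g l) + (if l = q0 then g q0 else 0) := by
    intro l; by_cases h : l = q0 <;> simp [h]
  rw [Finset.sum_congr rfl fun l _ => h l, Finset.sum_add_distrib]
  congr 1
  simp [Finset.sum_ite_eq']

end AuxLemmas

lemma conjoin_inr_entry (X : WA A S) (xI xF : X.Q) {Y : WA A S} {yI yF : Y.Q}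
    (hY : IsNormalizedAt Y yI yF) (hyI : yI ≠ yF) :
    ∀ (u : List A) (j : Y.Q) (hj : j ≠ yF),
      Mword (conjoinWA X xI xF Y yI yF) u (Sum.inr ⟨j, hj⟩) (Sum.inr ⟨yI, hyI⟩)
        = (if u = [] ∧ j = yI then 1 else 0)
          + cmul (fun v => Mword Y v j yF) (cstar (convB Y)) u := by
  have hy0 : convB Y [] = 0 := by
    rw [convB_eq hY, Mword_nil, Matrix.one_apply, if_neg hY.1]
  have hPF : (fun v => Mword Y v yF yF) = (cone : List A → S) := by
    funext v
    rw [Mword_from_final hY, cone_eq]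
    cases v <;> simp
  intro u
  induction u with
  | nil =>
    intro j hj
    rw [Mword_nil]; erw [Matrix.one_apply]; rw [cmul_nil, cstar]
    simp only [Mword_nil, Matrix.one_apply, List.length_nil, zero_add,
      Finset.range_one, Finset.sum_singleton]
    rw [if_neg hj]
    simp [Sum.inr.injEq, Subtype.ext_iff]
  | cons a u ih =>
    intro j hj
    refine (Mword_cons_apply _ _ _ _ _).trans ?_
    erw [Fintype.sum_sum_type]
    have hzero : ∀ i : {i : X.Q // i ≠ xF},
        (conjoinWA X xI xF Y yI yF).M a (Sum.inr ⟨j, hj⟩) (Sum.inl i) *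
          Mword (conjoinWA X xI xF Y yI yF) u (Sum.inl i) (Sum.inr ⟨yI, hyI⟩) = 0 := by
      intro i
      show (0 : S) * _ = 0
      rw [zero_mul]
    rw [Finset.sum_congr rfl (fun i _ => hzero i), Finset.sum_const_zero, zero_add]
    -- second block
    have hentry : ∀ l : {l : Y.Q // l ≠ yF},
        (conjoinWA X xI xF Y yI yF).M a (Sum.inr ⟨j, hj⟩) (Sum.inr l) *
          Mword (conjoinWA X xI xF Y yI yF) u (Sum.inr l) (Sum.inr ⟨yI, hyI⟩)
        = (if l.1 = yI then Y.M a j yF else Y.M a j l.1) *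
            ((if u = [] ∧ l.1 = yI then 1 else 0)
              + cmul (fun v => Mword Y v l.1 yF) (cstar (convB Y)) u) := by
      intro l
      rcases l with ⟨l, hl⟩
      rw [ih l hl]
      rfl
    rw [Finset.sum_congr rfl (fun l _ => hentry l)]
    rw [sum_subtype_ne (S := S) yF (fun l =>
      (if l = yI then Y.M a j yF else Y.M a j l) *
        ((if u = [] ∧ l = yI then 1 else 0)
          + cmul (fun v => Mword Y v l yF) (cstar (convB Y)) u))]
    -- RHS
    rw [if_neg (by simp), zero_add, cmul_cons]
    rw [show Mword Y [] j yF = (0 : S) by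
      rw [Mword_nil, Matrix.one_apply, if_neg hj], zero_mul, zero_add]
    have hrhs : ∀ k ∈ Finset.range (u.length + 1),
        Mword Y (a :: u.take k) j yF * cstar (convB Y) (u.drop k)
          = ∑ l : Y.Q, Y.M a j l * (Mword Y (u.take k) l yF * cstar (convB Y) (u.drop k)) := by
      intro k _
      rw [Mword_cons_apply, Finset.sum_mul]
      exact Finset.sum_congr rfl fun l _ => mul_assoc _ _ _
    rw [Finset.sum_congr rfl hrhs, Finset.sum_comm]
    have hcmul : ∀ l : Y.Q,
        ∑ k ∈ Finset.range (u.length + 1),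
          Y.M a j l * (Mword Y (u.take k) l yF * cstar (convB Y) (u.drop k))
        = Y.M a j l * cmul (fun v => Mword Y v l yF) (cstar (convB Y)) u := by
      intro l
      rw [← Finset.mul_sum]
      rfl
    rw [Finset.sum_congr rfl (fun l _ => hcmul l)]
    -- now both sides are sums over Y.Q; relate via swap yI yF
    refine Fintype.sum_equiv (Equiv.swap yI yF) _ _ fun l => ?_
    by_cases h1 : l = yF
    · subst h1
      rw [if_pos rfl, Equiv.swap_apply_right, hY.2.2.2.1, zero_mul]
    · rw [if_neg h1]
      by_cases h2 : l = yI
      · subst h2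
        rw [Equiv.swap_apply_left, if_pos rfl, hPF, cmul_cone_left,
          show (fun v => Mword Y v l yF) = convB Y from
            funext fun v => (convB_eq hY v).symm]
        congr 1
        rw [show (if u = [] ∧ l = l then (1:S) else 0) = cone u by
          rw [cone_eq]; simp]
        exact (cstar_unfold hy0 u).symm
      · rw [if_neg h2, Equiv.swap_apply_of_ne_of_ne h2 h1]
        simp [h2]



lemma conjoin_inl_entry {X : WA A S} {xI xF : X.Q} (hX : IsNormalizedAt X xI xF)
    {Y : WA A S} {yI yF : Y.Q} (hY : IsNormalizedAt Y yI yF) (hyI : yI ≠ yF) :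
    ∀ (u : List A) (i : X.Q) (hi : i ≠ xF),
      Mword (conjoinWA X xI xF Y yI yF) u (Sum.inl ⟨i, hi⟩) (Sum.inr ⟨yI, hyI⟩)
        = cmul (fun v => Mword X v i xF) (cstar (convB Y)) u := by
  have hy0 : convB Y [] = 0 := by
    rw [convB_eq hY, Mword_nil, Matrix.one_apply, if_neg hY.1]
  have hPFX : (fun v => Mword X v xF xF) = (cone : List A → S) := by
    funext v; rw [Mword_from_final hX, cone_eq]; cases v <;> simp
  intro u
  induction u with
  | nil =>
    intro i hi
    rw [Mword_nil, cmul_nil, Mword_nil, Matrix.one_apply]; erw [Matrix.one_apply]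
    simp [hi]
  | cons a u ih =>
    intro i hi
    refine (Mword_cons_apply _ _ _ _ _).trans ?_
    erw [Fintype.sum_sum_type]
    have h1 : ∀ i' : {i' : X.Q // i' ≠ xF},
        (conjoinWA X xI xF Y yI yF).M a (Sum.inl ⟨i, hi⟩) (Sum.inl i') *
          Mword (conjoinWA X xI xF Y yI yF) u (Sum.inl i') (Sum.inr ⟨yI, hyI⟩)
        = X.M a i i'.1 * cmul (fun v => Mword X v i'.1 xF) (cstar (convB Y)) u := by
      intro i'
      rcases i' with ⟨i', hi'⟩
      rw [ih i' hi']
      rfl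
    have h2 : ∀ l : {l : Y.Q // l ≠ yF},
        (conjoinWA X xI xF Y yI yF).M a (Sum.inl ⟨i, hi⟩) (Sum.inr l) *
          Mword (conjoinWA X xI xF Y yI yF) u (Sum.inr l) (Sum.inr ⟨yI, hyI⟩)
        = (if l.1 = yI then X.M a i xF else 0) *
            ((if u = [] ∧ l.1 = yI then 1 else 0)
              + cmul (fun v => Mword Y v l.1 yF) (cstar (convB Y)) u) := by
      intro l
      rcases l with ⟨l, hl⟩
      rw [conjoin_inr_entry X xI xF hY hyI u l hl]
      rfl
    rw [Finset.sum_congr rfl (fun i' _ => h1 i'), Finset.sum_congr rfl (fun l _ => h2 l)]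
    have hsum2 : (∑ l : {l : Y.Q // l ≠ yF}, (if l.1 = yI then X.M a i xF else 0) *
            ((if u = [] ∧ l.1 = yI then 1 else 0)
              + cmul (fun v => Mword Y v l.1 yF) (cstar (convB Y)) u))
        = X.M a i xF * cstar (convB Y) u := by
      rw [Fintype.sum_eq_single (⟨yI, hyI⟩ : {l : Y.Q // l ≠ yF})]
      · rw [if_pos rfl]
        rw [show (fun v => Mword Y v (Subtype.mk yI hyI).1 yF) = convB Y from
          funext fun v => (convB_eq hY v).symm]
        congr 1
        rw [show (if u = [] ∧ (Subtype.mk yI hyI).1 = yI then (1:S) else 0) = cone u by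
          rw [cone_eq]; simp]
        exact (cstar_unfold hy0 u).symm
      · intro l hl
        rw [if_neg (fun hc => hl (Subtype.ext hc)), zero_mul]
    rw [hsum2, sum_subtype_ne (S := S) xF (fun l =>
      X.M a i l * cmul (fun v => Mword X v l xF) (cstar (convB Y)) u)]
    -- now work on the RHS
    rw [cmul_cons, show Mword X [] i xF = (0 : S) by
      rw [Mword_nil, Matrix.one_apply, if_neg hi], zero_mul, zero_add]
    have hrhs : ∀ k ∈ Finset.range (u.length + 1),
        Mword X (a :: u.take k) i xF * cstar (convB Y) (u.drop k)
          = ∑ l : X.Q, X.M a i l * (Mword X (u.take k) l xF * cstar (convB Y) (u.drop k)) := by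
      intro k _
      rw [Mword_cons_apply, Finset.sum_mul]
      exact Finset.sum_congr rfl fun l _ => mul_assoc _ _ _
    rw [Finset.sum_congr rfl hrhs, Finset.sum_comm]
    have hcmul : ∀ l : X.Q,
        ∑ k ∈ Finset.range (u.length + 1),
          X.M a i l * (Mword X (u.take k) l xF * cstar (convB Y) (u.drop k))
        = X.M a i l * cmul (fun v => Mword X v l xF) (cstar (convB Y)) u := by
      intro l
      rw [← Finset.mul_sum]
      rfl
    rw [Finset.sum_congr rfl (fun l _ => hcmul l)]
    rw [sum_split_at xF (fun l =>
      X.M a i l * cmul (fun v => Mword X v l xF) (cstar (convB Y)) u)]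
    congr 1
    rw [hPFX, cmul_cone_left]

/-- the diverging behavior of the conjoin of two normalized
automata is the conjoin of their converging behaviors. -/
theorem divB_conjoinWA (A S : Type) [Semiring S]
    (X : WA A S) (xI xF : X.Q) (hX : IsNormalizedAt X xI xF)
    (Y : WA A S) (yI yF : Y.Q) (hY : IsNormalizedAt Y yI yF) :
    ∀ (w : ℕ → A) (n : ℕ),
      divB (conjoinWA X xI xF Y yI yF) w n
        = cmul (convB X) (cstar (convB Y)) (wpre w n) *
            chi w (cmul (convB X) (cstar (convB Y))) := by
  intro w n
  set C := conjoinWA X xI xF Y yI yF with hC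
  set qS : C.Q := Sum.inl ⟨xI, hX.1⟩ with hqS
  set qT : C.Q := Sum.inr ⟨yI, hY.1⟩ with hqT
  have key : ∀ u, Mword C u qS qT = cmul (convB X) (cstar (convB Y)) u := by
    intro u
    show Mword (conjoinWA X xI xF Y yI yF) u (Sum.inl ⟨xI, hX.1⟩)
      (Sum.inr ⟨yI, hY.1⟩) = _
    rw [conjoin_inl_entry hX hY hY.1 u xI hX.1,
      show (fun v => Mword X v xI xF) = convB X from
        funext fun v => (convB_eq hX v).symm]
  have hact : Activated C w qS qT
      ↔ ∀ n₀, ∃ n', n₀ ≤ n' ∧ cmul (convB X) (cstar (convB Y)) (wpre w n') ≠ 0 := by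
    unfold Activated
    simp only [key]
  have hI : C.I qS = 1 := by show (if xI = xI then (1:S) else 0) = 1; simp
  have hF : C.F qT = 1 := by show (if yI = yI then (1:S) else 0) = 1; simp
  rw [divB]
  rw [Fintype.sum_eq_single ((qS, qT) : C.Q × C.Q)]
  · rw [hI, hF, one_mul, mul_one, key, chi]
    by_cases h : ∀ n₀, ∃ n', n₀ ≤ n' ∧ cmul (convB X) (cstar (convB Y)) (wpre w n') ≠ 0
    · rw [if_pos (hact.2 h), if_pos h, mul_one]
    · rw [if_neg (fun hc => h (hact.1 hc)), if_neg h, mul_zero]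
  · intro p hp
    have hz : C.I p.1 * Mword C (wpre w n) p.1 p.2 * C.F p.2 = 0 := by
      rcases p with ⟨p1, p2⟩
      by_cases h1 : p1 = qS
      · have h2 : p2 ≠ qT := by
          intro h2
          exact hp (by rw [h1, h2])
        have : C.F p2 = 0 := by
          rcases p2 with i | j
          · rfl
          · show (if j.1 = yI then (1:S) else 0) = 0
            rw [if_neg]
            intro hc
            exact h2 (by rw [hqT]; exact congrArg Sum.inr (Subtype.ext hc))
        rw [this, mul_zero]
      · have : C.I p1 = 0 := by
          rcases p1 with i | j
          · show (if i.1 = xI then (1:S) else 0) = 0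
            rw [if_neg]
            intro hc
            exact h1 (by rw [hqS]; exact congrArg Sum.inl (Subtype.ext hc))
          · rfl
        rw [this, zero_mul, zero_mul]
    rw [hz, ite_self]
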